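/- Assume θ(x)/x → 1 as x → ∞ (where θ(x) = ∑_{p ≤ x} log p). Then (1/log x) · ∑_{k=1}^{⌊x⌋} μ(k)·log(k)/k → 0 as x → ∞. -/

import Mathlib

open Filter

noncomputable def theta (x : ℝ) : ℝ :=
  ∑ p ∈ Finset.filter Nat.Prime (Finset.Icc 1 ⌊x⌋₊), Real.log p

section PNTAux
open Finset ArithmeticFunction
open scoped ArithmeticFunction.Moebius

theorem swap_sum (N : ℕ) (F : ℕ → ℕ → ℝ) :
    ∑ n ∈ Icc 1 N, ∑ p ∈ n.divisorsAntidiagonal, F p.1 p.2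
      = ∑ a ∈ Icc 1 N, ∑ b ∈ Icc 1 (N / a), F a b := by
  rw [Finset.sum_sigma', Finset.sum_sigma']
  refine Finset.sum_nbij' (fun p => ⟨p.2.1, p.2.2⟩) (fun p => ⟨p.1 * p.2, p.1, p.2⟩) ?_ ?_ ?_ ?_ ?_
  · rintro ⟨n, a, b⟩ h
    simp only [Finset.mem_sigma, Finset.mem_Icc, Nat.mem_divisorsAntidiagonal] at h ⊢
    obtain ⟨⟨h1, h2⟩, hab, hn0⟩ := h
    subst hab
    refine ⟨⟨Nat.one_le_iff_ne_zero.2 (by rintro rfl; simp at hn0), le_trans (Nat.le_mul_of_pos_right _ (Nat.pos_of_ne_zero (by rintro rfl; simp at hn0))) h2⟩, ⟨Nat.one_le_iff_ne_zero.2 (by rintro rfl; simp at hn0), ?_⟩⟩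
    exact (Nat.le_div_iff_mul_le (Nat.pos_of_ne_zero (by rintro rfl; simp at hn0))).2 (by rw [mul_comm]; exact h2)
  · rintro ⟨a, b⟩ h
    simp only [Finset.mem_sigma, Finset.mem_Icc] at h
    obtain ⟨⟨ha1, haN⟩, hb1, hbN⟩ := h
    have ha0 : 0 < a := ha1
    have hab : a * b ≤ N := by
      rw [mul_comm] at *; exact (Nat.le_div_iff_mul_le ha0).1 hbN
    refine Finset.mem_sigma.2 ⟨Finset.mem_Icc.2 ⟨Nat.one_le_iff_ne_zero.2 (by positivity), hab⟩, Nat.mem_divisorsAntidiagonal.2 ⟨rfl, by positivity⟩⟩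
  · rintro ⟨n, a, b⟩ h
    simp only [Finset.mem_sigma, Nat.mem_divisorsAntidiagonal] at h
    obtain ⟨-, hab, -⟩ := h
    simp [hab]
  · rintro ⟨a, b⟩ h; rfl
  · rintro ⟨n, a, b⟩ h; rfl

theorem mudiv_sum (n : ℕ) : ∑ d ∈ n.divisors, ((μ d : ℤ) : ℝ) = if n = 1 then 1 else 0 := by
  have h := coe_mul_zeta_apply (f := (μ : ArithmeticFunction ℤ)) (x := n)
  rw [moebius_mul_coe_zeta, one_apply] at h
  rw [← Int.cast_sum, ← h]
  split_ifs <;> simp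

noncomputable def mm (N : ℕ) : ℝ := ∑ a ∈ Icc 1 N, (μ a : ℝ) / a

noncomputable def MM (N : ℕ) : ℝ := ∑ a ∈ Icc 1 N, (μ a : ℝ)

noncomputable def AA (N : ℕ) : ℝ := ∑ a ∈ Icc 1 N, (μ a : ℝ) * (N % a : ℕ) / a

noncomputable def harm (N : ℕ) : ℝ := ∑ b ∈ Icc 1 N, 1 / (b : ℝ)

theorem if_one_sum {N : ℕ} (hN : 1 ≤ N) :
    ∑ n ∈ Icc 1 N, (if n = 1 then (1:ℝ) else 0) = 1 := by
  rw [Finset.sum_ite_eq']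
  simp [hN]

theorem sum_mu_floor {N : ℕ} (hN : 1 ≤ N) :
    ∑ a ∈ Icc 1 N, (μ a : ℝ) * ((N / a : ℕ) : ℝ) = 1 := by
  calc ∑ a ∈ Icc 1 N, (μ a : ℝ) * ((N / a : ℕ) : ℝ)
      = ∑ a ∈ Icc 1 N, ∑ b ∈ Icc 1 (N / a), (μ a : ℝ) := by
        refine Finset.sum_congr rfl fun a _ => ?_
        rw [Finset.sum_const, Nat.card_Icc, nsmul_eq_mul, mul_comm]
        simp
    _ = ∑ n ∈ Icc 1 N, ∑ p ∈ n.divisorsAntidiagonal, (μ p.1 : ℝ) :=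
        (swap_sum N fun a b => (μ a : ℝ)).symm
    _ = ∑ n ∈ Icc 1 N, (if n = 1 then (1:ℝ) else 0) := by
        refine Finset.sum_congr rfl fun n _ => ?_
        rw [Nat.sum_divisorsAntidiagonal (fun a b => ((μ a : ℤ) : ℝ))]
        exact mudiv_sum n
    _ = 1 := if_one_sum hN

theorem sum_mu_harm {N : ℕ} (hN : 1 ≤ N) :
    ∑ a ∈ Icc 1 N, (μ a : ℝ) / a * harm (N / a) = 1 := by
  calc ∑ a ∈ Icc 1 N, (μ a : ℝ) / a * harm (N / a)
      = ∑ a ∈ Icc 1 N, ∑ b ∈ Icc 1 (N / a), (μ a : ℝ) / (a * b) := by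
        refine Finset.sum_congr rfl fun a _ => ?_
        rw [harm, Finset.mul_sum]
        refine Finset.sum_congr rfl fun b _ => ?_
        rw [div_mul_div_comm, mul_one]
    _ = ∑ n ∈ Icc 1 N, ∑ p ∈ n.divisorsAntidiagonal, (μ p.1 : ℝ) / (p.1 * p.2) :=
        (swap_sum N fun a b => (μ a : ℝ) / (a * b)).symm
    _ = ∑ n ∈ Icc 1 N, (if n = 1 then (1:ℝ) else 0) := by
        refine Finset.sum_congr rfl fun n hn => ?_
        have hn1 : 1 ≤ n := (Finset.mem_Icc.1 hn).1
        have : ∀ p ∈ n.divisorsAntidiagonal, (μ p.1 : ℝ) / (p.1 * p.2) = (μ p.1 : ℝ) / n := by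
          intro p hp
          have h1 := (Nat.mem_divisorsAntidiagonal.1 hp).1
          have hn' : (p.1 : ℝ) * p.2 = n := by exact_mod_cast congrArg (Nat.cast : ℕ → ℝ) h1
          rw [hn']
        rw [Finset.sum_congr rfl this, ← Finset.sum_div,
          Nat.sum_divisorsAntidiagonal (fun a b => ((μ a : ℤ) : ℝ)), mudiv_sum]
        split_ifs with h
        · simp [h]
        · simp
    _ = 1 := if_one_sum hN

theorem abs_mu_le (a : ℕ) : |(μ a : ℝ)| ≤ 1 := by
  have := abs_moebius_le_one (n := a)
  exact_mod_cast (by exact_mod_cast this : |((μ a : ℤ) : ℝ)| ≤ 1)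

theorem N_mul_mm {N : ℕ} (hN : 1 ≤ N) : (N : ℝ) * mm N = 1 + AA N := by
  rw [mm, Finset.mul_sum, AA, ← sum_mu_floor hN, ← Finset.sum_add_distrib]
  refine Finset.sum_congr rfl fun a ha => ?_
  have ha1 : 1 ≤ a := (Finset.mem_Icc.1 ha).1
  have ha0 : (a : ℝ) ≠ 0 := by positivity
  have key : (N : ℝ) = a * (N / a : ℕ) + (N % a : ℕ) := by
    exact_mod_cast congrArg (Nat.cast : ℕ → ℝ) (Nat.div_add_mod N a).symm
  rw [key]
  field_simp

theorem abs_AA_le (N : ℕ) : |AA N| ≤ N := by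
  refine (Finset.abs_sum_le_sum_abs _ _).trans ?_
  have : ∀ a ∈ Icc 1 N, |(μ a : ℝ) * (N % a : ℕ) / a| ≤ 1 := by
    intro a ha
    have ha1 : 1 ≤ a := (Finset.mem_Icc.1 ha).1
    have h1 : ((N % a : ℕ) : ℝ) < a := by exact_mod_cast Nat.mod_lt N ha1
    have h2 : (0:ℝ) < a := by exact_mod_cast ha1
    rw [abs_div, abs_mul, abs_of_nonneg (by positivity : (0:ℝ) ≤ ((N % a : ℕ):ℝ)),
      abs_of_pos h2, div_le_one h2]
    calc |(μ a : ℝ)| * (N % a : ℕ) ≤ 1 * a := by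
          exact mul_le_mul (abs_mu_le a) h1.le (by positivity) zero_le_one
      _ = a := one_mul _
  refine (Finset.sum_le_sum this).trans ?_
  simp [Nat.card_Icc]

theorem abs_mm_le (N : ℕ) : |mm N| ≤ 2 := by
  rcases Nat.eq_zero_or_pos N with h | h
  · simp [h, mm]
  have hN : (0:ℝ) < N := by exact_mod_cast h
  have h1 : (N:ℝ) * |mm N| ≤ 1 + N := by
    have key : |(N:ℝ) * mm N| ≤ 1 + N := by
      rw [N_mul_mm h]
      calc |1 + AA N| ≤ |(1:ℝ)| + |AA N| := abs_add_le _ _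
        _ ≤ 1 + N := by rw [abs_one]; linarith [abs_AA_le N]
    rwa [abs_mul, abs_of_pos hN] at key
  have h2 : (1:ℝ) ≤ N := by exact_mod_cast h
  nlinarith [abs_nonneg (mm N)]

noncomputable def emc : ℝ := Real.eulerMascheroniConstant

theorem harm_eq (N : ℕ) : harm N = (harmonic N : ℝ) := by
  induction N with
  | zero => simp [harm]
  | succ n ih =>
    rw [harm, Finset.sum_Icc_succ_top (by omega), ← harm, ih, harmonic_succ]
    push_cast
    ring

theorem harm_sub_log {n : ℕ} (hn : 1 ≤ n) : |harm n - Real.log n - emc| ≤ 1 / n := by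
  have h1 := Real.eulerMascheroniSeq_lt_eulerMascheroniConstant n
  have h2 := Real.eulerMascheroniConstant_lt_eulerMascheroniSeq' n
  rw [Real.eulerMascheroniSeq] at h1
  rw [Real.eulerMascheroniSeq', if_neg (by omega)] at h2
  have hn0 : (0:ℝ) < n := by exact_mod_cast hn
  have hlog : Real.log (n + 1) - Real.log n ≤ 1 / n := by
    rw [← Real.log_div (by positivity) (by positivity)]
    have := Real.log_le_sub_one_of_pos (x := ((n:ℝ)+1)/n) (by positivity)
    have heq : ((n:ℝ)+1)/n - 1 = 1/n := by field_simp; ring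
    linarith
  have hemc : emc = Real.eulerMascheroniConstant := rfl
  rw [harm_eq, hemc, abs_le]
  constructor
  · nlinarith
  · push_cast at h1 ⊢
    nlinarith

theorem harm_le (n : ℕ) (hn : 1 ≤ n) : harm n ≤ Real.log n + 1 := by
  have h2 := Real.eulerMascheroniConstant_lt_eulerMascheroniSeq' n
  have h3 := Real.one_half_lt_eulerMascheroniConstant
  rw [Real.eulerMascheroniSeq', if_neg (by omega)] at h2
  have h4 : (Real.eulerMascheroniSeq' n) ≤ Real.eulerMascheroniSeq' 1 := by
    rcases eq_or_lt_of_le hn with h | h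
    · rw [← h]
    · exact (Real.strictAnti_eulerMascheroniSeq' h).le
  rw [Real.eulerMascheroniSeq'_one, Real.eulerMascheroniSeq', if_neg (by omega)] at h4
  rw [harm_eq]
  linarith

theorem log_sub_harm {y : ℝ} (hy : 1 ≤ y) :
    |Real.log y - harm ⌊y⌋₊ + emc| ≤ 4 / y := by
  set n := ⌊y⌋₊ with hn
  have hn1 : 1 ≤ n := Nat.le_floor (by exact_mod_cast hy)
  have hny : (n : ℝ) ≤ y := Nat.floor_le (by linarith)
  have hyn : y < n + 1 := Nat.lt_floor_add_one y
  have hn0 : (0:ℝ) < n := by exact_mod_cast hn1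
  have h2n : y ≤ 2 * n := by
    have : (1:ℝ) ≤ n := by exact_mod_cast hn1
    linarith
  have hlog : 0 ≤ Real.log y - Real.log n ∧ Real.log y - Real.log n ≤ 1 / n := by
    constructor
    · have := Real.log_le_log (by positivity) hny
      linarith
    · rw [← Real.log_div (by positivity) (by positivity)]
      have := Real.log_le_sub_one_of_pos (x := y / n) (by positivity)
      have h5 : y / n - 1 ≤ 1 / n := by
        rw [div_sub_one (by positivity), div_le_div_iff₀ hn0 hn0]
        nlinarith
      linarith
  have h6 := harm_sub_log hn1
  have h7 : 1 / (n:ℝ) ≤ 2 / y := by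
    rw [div_le_div_iff₀ hn0 (by linarith)]
    linarith
  have h8 : |Real.log y - harm n + emc| ≤ |Real.log y - Real.log n| + |harm n - Real.log n - emc| := by
    have : Real.log y - harm n + emc = (Real.log y - Real.log n) - (harm n - Real.log n - emc) := by ring
    rw [this]
    exact abs_sub _ _
  have h9 : |Real.log y - Real.log n| ≤ 1 / n := abs_le.2 ⟨by linarith [hlog.1], hlog.2⟩
  calc |Real.log y - harm n + emc| ≤ 1/n + 1/n := by linarith [h8, h9, h6]
    _ ≤ 2/y + 2/y := by linarith [h7]
    _ = 4 / y := by ring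

noncomputable def HH (N : ℕ) : ℝ := ∑ n ∈ Icc 1 N, (μ n : ℝ) * Real.log n / n

noncomputable def SS (N : ℕ) : ℝ := ∑ d ∈ Icc 1 N, (μ d : ℝ) / d * Real.log ((N : ℝ) / d)

theorem HH_eq {N : ℕ} (hN : 1 ≤ N) : HH N = mm N * Real.log N - SS N := by
  rw [HH, SS, mm, Finset.sum_mul, ← Finset.sum_sub_distrib]
  refine Finset.sum_congr rfl fun n hn => ?_
  have hn1 : 1 ≤ n := (Finset.mem_Icc.1 hn).1
  have hn0 : (0:ℝ) < n := by exact_mod_cast hn1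
  have hN0 : (0:ℝ) < N := by exact_mod_cast hN
  rw [Real.log_div (by positivity) (by positivity)]
  ring

theorem SS_bound {N : ℕ} (hN : 1 ≤ N) : |SS N| ≤ 5 + 2 * |emc| := by
  have hN0 : (0:ℝ) < N := by exact_mod_cast hN
  have key : SS N = 1 - emc * mm N +
      ∑ d ∈ Icc 1 N, (μ d : ℝ) / d *
        (Real.log ((N:ℝ)/d) - harm (N / d) + emc) := by
    rw [SS, ← sum_mu_harm hN, mm, Finset.mul_sum, ← Finset.sum_sub_distrib,
      ← Finset.sum_add_distrib]
    refine Finset.sum_congr rfl fun d hd => ?_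
    ring
  have hR : |∑ d ∈ Icc 1 N, (μ d : ℝ) / d *
      (Real.log ((N:ℝ)/d) - harm (N / d) + emc)| ≤ 4 := by
    refine (Finset.abs_sum_le_sum_abs _ _).trans ?_
    have hterm : ∀ d ∈ Icc 1 N, |(μ d : ℝ) / d *
        (Real.log ((N:ℝ)/d) - harm (N / d) + emc)| ≤ 4 / N := by
      intro d hd
      obtain ⟨hd1, hdN⟩ := Finset.mem_Icc.1 hd
      have hd0 : (0:ℝ) < d := by exact_mod_cast hd1
      have hy : (1:ℝ) ≤ (N:ℝ)/d := by
        rw [le_div_iff₀ hd0]; rw [one_mul]; exact_mod_cast hdN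
      have hfl : ⌊(N:ℝ)/d⌋₊ = N / d := by
        rw [Nat.floor_div_natCast, Nat.floor_natCast]
      have h1 := log_sub_harm hy
      rw [hfl] at h1
      have h2 : 4 / ((N:ℝ)/d) = 4 * d / N := by
        field_simp
      calc |(μ d : ℝ) / d * (Real.log ((N:ℝ)/d) - harm (N / d) + emc)|
          = |(μ d : ℝ)| / d * |Real.log ((N:ℝ)/d) - harm (N / d) + emc| := by
            rw [abs_mul, abs_div, abs_of_pos hd0]
        _ ≤ (1 / d) * (4 * d / N) := by
            refine mul_le_mul ?_ (h2 ▸ h1) (abs_nonneg _) (by positivity)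
            rw [div_le_div_iff₀ hd0 hd0]
            nlinarith [abs_mu_le d]
        _ = 4 / N := by field_simp
    refine (Finset.sum_le_sum hterm).trans ?_
    rw [Finset.sum_const, Nat.card_Icc, nsmul_eq_mul]
    push_cast
    have h4 : (N:ℝ) * (4 / N) = 4 := by field_simp
    rw [h4]
  rw [key]
  calc |1 - emc * mm N + ∑ d ∈ Icc 1 N, (μ d : ℝ) / d *
        (Real.log ((N:ℝ)/d) - harm (N / d) + emc)|
      ≤ |1 - emc * mm N| + |∑ d ∈ Icc 1 N, (μ d : ℝ) / d *
        (Real.log ((N:ℝ)/d) - harm (N / d) + emc)| := abs_add_le _ _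
    _ ≤ (|(1:ℝ)| + |emc * mm N|) + 4 := by
        gcongr
        exact abs_sub _ _
    _ ≤ 5 + 2 * |emc| := by
        rw [abs_one, abs_mul]
        nlinarith [abs_mm_le N, abs_nonneg emc, abs_nonneg (mm N)]

noncomputable def psi (N : ℕ) : ℝ := ∑ n ∈ Icc 1 N, Λ n

noncomputable def thetaN (N : ℕ) : ℝ := ∑ p ∈ (Icc 1 N).filter Nat.Prime, Real.log p

noncomputable def restN (N : ℕ) : ℝ := ∑ n ∈ (Icc 1 N).filter (fun n => ¬ n.Prime), Λ n

theorem psi_eq (N : ℕ) : psi N = thetaN N + restN N := by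
  rw [psi, thetaN, restN, ← Finset.sum_filter_add_sum_filter_not (Icc 1 N) Nat.Prime]
  congr 1
  refine Finset.sum_congr rfl fun p hp => ?_
  exact vonMangoldt_apply_prime (Finset.mem_filter.1 hp).2

theorem restN_nonneg (N : ℕ) : 0 ≤ restN N :=
  Finset.sum_nonneg fun n _ => vonMangoldt_nonneg

theorem restN_le (N : ℕ) (hN : 1 ≤ N) :
    restN N ≤ (Nat.sqrt N : ℝ) * (Nat.log 2 N : ℝ) * Real.log N := by
  have hN0 : N ≠ 0 := by omega
  set S := (Icc 1 N).filter (fun n => ¬ n.Prime) with hS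
  set T := S.filter IsPrimePow with hT
  have hstep : restN N = ∑ n ∈ T, Λ n := by
    rw [restN, hT]
    exact (Finset.sum_filter_of_ne (fun x _ hx => vonMangoldt_ne_zero_iff.1 hx)).symm
  -- every element of T is p ^ k with k ≥ 2
  have hshape : ∀ n ∈ T, n = n.minFac ^ (n.factorization n.minFac) ∧
      2 ≤ n.minFac ∧ n.minFac ≤ Nat.sqrt N ∧ 2 ≤ n.factorization n.minFac ∧
      n.factorization n.minFac ≤ Nat.log 2 N := by
    intro n hn
    rw [hT, Finset.mem_filter] at hn
    obtain ⟨hnS, hpp⟩ := hn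
    rw [hS, Finset.mem_filter, Finset.mem_Icc] at hnS
    obtain ⟨⟨-, hnN⟩, hnp⟩ := hnS
    obtain ⟨p, k, hp, hk, rfl⟩ := hpp
    replace hp := Nat.prime_iff.mpr hp
    have hk2 : 2 ≤ k := by
      rcases Nat.lt_or_ge k 2 with h | h
      · interval_cases k
        · rw [pow_one] at hnp; exact absurd hp hnp
      · exact h
    have hmf : (p ^ k).minFac = p := hp.pow_minFac (by omega)
    have hfac : (p ^ k).factorization p = k := by
      rw [hp.factorization_pow, Finsupp.single_eq_same]
    have hp2 : 2 ≤ p := hp.two_le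
    have hppk : p * p ≤ p ^ k := by
      calc p * p = p ^ 2 := (sq p).symm
        _ ≤ p ^ k := Nat.pow_le_pow_right (by omega) hk2
    have h2k : 2 ^ k ≤ N := le_trans (Nat.pow_le_pow_left hp2 k) hnN
    refine ⟨by rw [hmf, hfac], by rw [hmf]; exact hp2, ?_, ?_, ?_⟩
    · rw [hmf]; exact Nat.le_sqrt.2 (le_trans hppk hnN)
    · rw [hmf, hfac]; exact hk2
    · rw [hmf, hfac]; exact (Nat.le_log_iff_pow_le one_lt_two hN0).2 h2k
  have hcard : T.card ≤ Nat.sqrt N * Nat.log 2 N := by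
    have hinj : ∀ n ∈ T, ∀ m ∈ T,
        (fun n : ℕ => (n.minFac, n.factorization n.minFac)) n =
        (fun n : ℕ => (n.minFac, n.factorization n.minFac)) m → n = m := by
      intro n hn m hm h
      have h1 := (hshape n hn).1
      have h2 := (hshape m hm).1
      simp only [Prod.mk.injEq] at h
      rw [h1, h.2, h.1, ← h2]
    have hmaps : ∀ n ∈ T, (n.minFac, n.factorization n.minFac) ∈
        (Icc 2 (Nat.sqrt N)) ×ˢ (Icc 2 (Nat.log 2 N)) := by
      intro n hn
      obtain ⟨-, h2, h3, h4, h5⟩ := hshape n hn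
      exact Finset.mem_product.2 ⟨Finset.mem_Icc.2 ⟨h2, h3⟩, Finset.mem_Icc.2 ⟨h4, h5⟩⟩
    have := Finset.card_le_card_of_injOn _ hmaps hinj
    calc T.card ≤ ((Icc 2 (Nat.sqrt N)) ×ˢ (Icc 2 (Nat.log 2 N))).card := this
      _ = (Icc 2 (Nat.sqrt N)).card * (Icc 2 (Nat.log 2 N)).card := Finset.card_product _ _
      _ ≤ Nat.sqrt N * Nat.log 2 N := by
          rw [Nat.card_Icc, Nat.card_Icc]
          exact Nat.mul_le_mul (by omega) (by omega)
  have hlogN : 0 ≤ Real.log N := Real.log_natCast_nonneg N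
  calc restN N = ∑ n ∈ T, Λ n := hstep
    _ ≤ ∑ n ∈ T, Real.log N := by
        refine Finset.sum_le_sum fun n hn => ?_
        have hn' : n ∈ Icc 1 N := by
          have := Finset.mem_filter.1 ((Finset.mem_filter.1 hn).1)
          exact this.1
        obtain ⟨h1, h2⟩ := Finset.mem_Icc.1 hn'
        calc Λ n ≤ Real.log n := vonMangoldt_le_log
          _ ≤ Real.log N := by
              apply Real.log_le_log (by exact_mod_cast h1) (by exact_mod_cast h2)
    _ = (T.card : ℝ) * Real.log N := by rw [Finset.sum_const, nsmul_eq_mul]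
    _ ≤ (Nat.sqrt N : ℝ) * (Nat.log 2 N : ℝ) * Real.log N := by
        have : (T.card : ℝ) ≤ (Nat.sqrt N : ℝ) * (Nat.log 2 N : ℝ) := by
          exact_mod_cast hcard
        exact mul_le_mul_of_nonneg_right this hlogN

theorem restN_div_tendsto : Tendsto (fun N : ℕ => restN N / N) atTop (nhds 0) := by
  have hbound : ∀ N : ℕ, 1 ≤ N → restN N / N ≤
      (Real.log N) ^ 2 / ((N:ℝ) ^ ((1:ℝ)/2) * Real.log 2) := by
    intro N hN
    have hN0 : (0:ℝ) < N := by exact_mod_cast hN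
    have hs : (Nat.sqrt N : ℝ) ≤ Real.sqrt N := by
      have h1 : ((Nat.sqrt N : ℝ)) ^ 2 ≤ (N:ℝ) := by
        exact_mod_cast Nat.sqrt_le' N
      have h2 := Real.sqrt_le_sqrt h1
      rwa [Real.sqrt_sq (by positivity)] at h2
    have hl : (Nat.log 2 N : ℝ) * Real.log 2 ≤ Real.log N := by
      have h1 : ((2 ^ Nat.log 2 N : ℕ) : ℝ) ≤ (N:ℝ) := by
        exact_mod_cast Nat.pow_log_le_self 2 (by omega)
      have h2 := Real.log_le_log (by positivity) h1
      rwa [Nat.cast_pow, Real.log_pow, Nat.cast_ofNat] at h2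
    have hlog2 : (0:ℝ) < Real.log 2 := Real.log_pos (by norm_num)
    have hlogN : (0:ℝ) ≤ Real.log N := Real.log_natCast_nonneg N
    have hl' : (Nat.log 2 N : ℝ) ≤ Real.log N / Real.log 2 := by
      rw [le_div_iff₀ hlog2]; exact hl
    have h3 : restN N ≤ Real.sqrt N * (Real.log N / Real.log 2) * Real.log N := by
      refine (restN_le N hN).trans ?_
      have hs0 : (0:ℝ) ≤ (Nat.sqrt N : ℝ) := by positivity
      have := mul_le_mul (mul_le_mul hs hl' (by positivity) (by positivity))
        (le_refl (Real.log N)) hlogN (by positivity)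
      exact this
    have hsq : Real.sqrt N = (N:ℝ) ^ ((1:ℝ)/2) := Real.sqrt_eq_rpow (N:ℝ)
    have hsqpos : (0:ℝ) < (N:ℝ) ^ ((1:ℝ)/2) := Real.rpow_pos_of_pos hN0 _
    rw [div_le_div_iff₀ hN0 (by positivity)]
    calc restN N * ((N:ℝ) ^ ((1:ℝ)/2) * Real.log 2)
        ≤ (Real.sqrt N * (Real.log N / Real.log 2) * Real.log N) *
          ((N:ℝ) ^ ((1:ℝ)/2) * Real.log 2) := by
          refine mul_le_mul_of_nonneg_right h3 (by positivity)
      _ = (Real.log N)^2 * ((N:ℝ) ^ ((1:ℝ)/2) * (N:ℝ) ^ ((1:ℝ)/2)) := by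
          rw [hsq]; field_simp
      _ = (Real.log N)^2 * N := by
          rw [← Real.rpow_add hN0]; norm_num
  have hlim : Tendsto (fun x : ℝ => (Real.log x) ^ 2 / (x ^ ((1:ℝ)/2) * Real.log 2))
      atTop (nhds 0) := by
    have h := (isLittleO_log_rpow_rpow_atTop (2:ℝ) (by norm_num : (0:ℝ) < 1/2)).tendsto_div_nhds_zero
    have h2 : Tendsto (fun x : ℝ => (Real.log x) ^ (2:ℝ) / x ^ ((1:ℝ)/2) / Real.log 2)
        atTop (nhds (0 / Real.log 2)) := h.div_const _
    rw [zero_div] at h2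
    refine h2.congr' ?_
    filter_upwards [eventually_ge_atTop (1:ℝ)] with x hx
    have h20 : ((2:ℕ):ℝ) = (2:ℝ) := by norm_num
    rw [div_div, ← h20, Real.rpow_natCast]
  have hlim2 : Tendsto (fun N : ℕ => (Real.log N)^2 / ((N:ℝ)^((1:ℝ)/2) * Real.log 2))
      atTop (nhds 0) := hlim.comp tendsto_natCast_atTop_atTop
  refine tendsto_of_tendsto_of_tendsto_of_le_of_le' tendsto_const_nhds hlim2 ?_ ?_
  · filter_upwards [eventually_ge_atTop 1] with N hN
    have : (0:ℝ) ≤ (N:ℝ) := by positivity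
    exact div_nonneg (restN_nonneg N) this
  · filter_upwards [eventually_ge_atTop 1] with N hN
    exact hbound N hN

theorem psi_div_tendsto
    (hth : Tendsto (fun N : ℕ => thetaN N / N) atTop (nhds 1)) :
    Tendsto (fun N : ℕ => psi N / N) atTop (nhds 1) := by
  have h := hth.add restN_div_tendsto
  rw [add_zero] at h
  refine h.congr fun N => ?_
  rw [psi_eq, add_div]

theorem mu_log_eq (n : ℕ) (hn : 0 < n) :
    (μ n : ℝ) * Real.log n = -∑ p ∈ n.divisorsAntidiagonal, (μ p.1 : ℝ) * Λ p.2 := by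
  have key := (sum_eq_iff_sum_smul_moebius_eq
    (f := fun i => (μ i : ℝ) * Real.log i) (g := fun n => -Λ n)).1
    (fun n _ => sum_moebius_mul_log_eq) n hn
  rw [← key, ← Finset.sum_neg_distrib]
  refine Finset.sum_congr rfl fun p hp => ?_
  rw [zsmul_eq_mul]
  push_cast
  ring

theorem sum_mu_log_eq {N : ℕ} (hN : 1 ≤ N) :
    ∑ n ∈ Icc 1 N, (μ n : ℝ) * Real.log n
      = -∑ a ∈ Icc 1 N, (μ a : ℝ) * psi (N / a) := by
  have h1 : ∑ n ∈ Icc 1 N, (μ n : ℝ) * Real.log n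
      = ∑ n ∈ Icc 1 N, -∑ p ∈ n.divisorsAntidiagonal, (μ p.1 : ℝ) * Λ p.2 := by
    refine Finset.sum_congr rfl fun n hn => mu_log_eq n (Finset.mem_Icc.1 hn).1
  calc ∑ n ∈ Icc 1 N, (μ n : ℝ) * Real.log n
      = ∑ n ∈ Icc 1 N, -∑ p ∈ n.divisorsAntidiagonal, (μ p.1 : ℝ) * Λ p.2 := h1
    _ = -∑ n ∈ Icc 1 N, ∑ p ∈ n.divisorsAntidiagonal, (μ p.1 : ℝ) * Λ p.2 :=
        Finset.sum_neg_distrib _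
    _ = -∑ a ∈ Icc 1 N, ∑ b ∈ Icc 1 (N / a), (μ a : ℝ) * Λ b := by
        rw [swap_sum N (fun a b => (μ a : ℝ) * Λ b)]
    _ = -∑ a ∈ Icc 1 N, (μ a : ℝ) * psi (N / a) := by
        congr 1
        refine Finset.sum_congr rfl fun a _ => ?_
        rw [psi, Finset.mul_sum]

theorem sum_log_div_le {N : ℕ} (hN : 1 ≤ N) :
    ∑ n ∈ Icc 1 N, Real.log ((N:ℝ)/n) ≤ N := by
  have hN0 : (0:ℝ) < N := by exact_mod_cast hN
  have hfac0 : (0:ℝ) < (N.factorial : ℝ) := by exact_mod_cast Nat.factorial_pos N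
  have hlogfact : Real.log (N.factorial : ℝ) = ∑ n ∈ Icc 1 N, Real.log n := by
    rw [← Finset.prod_Ico_id_eq_factorial, ← Finset.Ico_add_one_right_eq_Icc, Nat.cast_prod, Real.log_prod]
    intro n hn
    have := (Finset.mem_Ico.1 hn).1
    positivity
  have hexp : ((N:ℝ))^N / (N.factorial : ℝ) ≤ Real.exp N := by
    calc ((N:ℝ))^N / (N.factorial : ℝ)
        ≤ ∑ i ∈ range (N+1), (N:ℝ)^i / (Nat.factorial i : ℝ) := by
          refine Finset.single_le_sum (f := fun i => (N:ℝ)^i / (Nat.factorial i : ℝ)) ?_ ?_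
          · intro i _; positivity
          · exact Finset.self_mem_range_succ N
      _ ≤ Real.exp N := Real.sum_le_exp_of_nonneg (by positivity) (N+1)
  have hkey : (N:ℝ) * Real.log N - Real.log (N.factorial : ℝ) ≤ N := by
    have h1 : Real.log (((N:ℝ))^N / (N.factorial : ℝ)) ≤ N := by
      have hpos : (0:ℝ) < ((N:ℝ))^N / (N.factorial : ℝ) := by positivity
      rw [Real.log_le_iff_le_exp hpos]; exact hexp
    rw [Real.log_div (by positivity) (by positivity), Real.log_pow] at h1
    exact_mod_cast h1
  calc ∑ n ∈ Icc 1 N, Real.log ((N:ℝ)/n)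
      = ∑ n ∈ Icc 1 N, (Real.log N - Real.log n) := by
        refine Finset.sum_congr rfl fun n hn => ?_
        have h1 := (Finset.mem_Icc.1 hn).1
        rw [Real.log_div (by positivity) (by exact_mod_cast Nat.one_le_iff_ne_zero.1 h1)]
    _ = (N:ℝ) * Real.log N - Real.log (N.factorial:ℝ) := by
        rw [Finset.sum_sub_distrib, hlogfact, Finset.sum_const, Nat.card_Icc,
          Nat.add_sub_cancel, nsmul_eq_mul]
    _ ≤ N := hkey

theorem psi_nonneg (N : ℕ) : 0 ≤ psi N :=
  Finset.sum_nonneg fun _ _ => vonMangoldt_nonneg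

theorem psi_mono : Monotone psi := by
  intro a b hab
  refine Finset.sum_le_sum_of_subset_of_nonneg (Finset.Icc_subset_Icc_right hab)
    fun _ _ _ => vonMangoldt_nonneg

theorem div_parts (N a : ℕ) (ha : 1 ≤ a) :
    ((N/a : ℕ):ℝ) ≤ (N:ℝ)/a ∧ (N:ℝ)/a < ((N/a:ℕ):ℝ) + 1 := by
  have ha0 : (0:ℝ) < a := by exact_mod_cast ha
  have key : (N:ℝ) = a * ((N/a : ℕ):ℝ) + ((N % a : ℕ):ℝ) := by
    exact_mod_cast congrArg (Nat.cast : ℕ → ℝ) (Nat.div_add_mod N a).symm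
  have hmod0 : (0:ℝ) ≤ ((N % a : ℕ):ℝ) := by positivity
  have hmod1 : ((N % a : ℕ):ℝ) < a := by exact_mod_cast Nat.mod_lt N ha
  constructor
  · rw [le_div_iff₀ ha0, mul_comm]; linarith
  · rw [div_lt_iff₀ ha0]; nlinarith

theorem MM_tendsto (hψ : Tendsto (fun N : ℕ => psi N / N) atTop (nhds 1)) :
    Tendsto (fun N : ℕ => MM N / N) atTop (nhds 0) := by
  rw [Metric.tendsto_atTop]
  intro ε hε
  obtain ⟨ε', hε'pos, hε'le, hε'1⟩ : ∃ e : ℝ, 0 < e ∧ e ≤ ε/4 ∧ e ≤ 1 :=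
    ⟨min (ε/4) 1, lt_min (by linarith) one_pos, min_le_left _ _, min_le_right _ _⟩
  -- choose Y
  obtain ⟨Y0, hY0⟩ := (Metric.tendsto_atTop.1 hψ ε' hε'pos)
  obtain ⟨Y, hY1, hYY0⟩ : ∃ Y : ℕ, 1 ≤ Y ∧ Y0 ≤ Y := ⟨max Y0 1, le_max_right _ _, le_max_left _ _⟩
  have hYprop : ∀ y : ℕ, Y ≤ y → |psi y - y| ≤ ε' * y := by
    intro y hy
    have hy1 : 1 ≤ y := le_trans hY1 hy
    have hy0 : (0:ℝ) < y := by exact_mod_cast hy1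
    have := hY0 y (le_trans hYY0 hy)
    rw [Real.dist_eq] at this
    have h3 : |(psi y / y - 1) * y| ≤ ε' * y := by
      rw [abs_mul, abs_of_pos hy0]
      exact mul_le_mul_of_nonneg_right this.le hy0.le
    have h4 : (psi y / y - 1) * y = psi y - y := by field_simp
    rwa [h4] at h3
  obtain ⟨C, hC1, hCge⟩ : ∃ C : ℝ, 1 ≤ C ∧ psi Y + (Y:ℝ) ≤ C := by
    refine ⟨psi Y + Y + 1, ?_, by linarith⟩
    have h1 : (1:ℝ) ≤ Y := by exact_mod_cast hY1
    have := psi_nonneg Y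
    linarith
  -- the per-term bound
  have hterm : ∀ N : ℕ, 1 ≤ N → ∀ a ∈ Icc 1 N,
      |psi (N / a) - (N:ℝ)/a| ≤ ε' * ((N:ℝ)/a) + C := by
    intro N hN a ha
    obtain ⟨ha1, haN⟩ := Finset.mem_Icc.1 ha
    obtain ⟨hq1, hq2⟩ := div_parts N a ha1
    have hyr0 : (0:ℝ) ≤ (N:ℝ)/a := by positivity
    rcases le_or_gt Y (N / a) with hq | hq
    · have h1 := hYprop (N / a) hq
      have h2 : ((N/a:ℕ):ℝ) ≤ (N:ℝ)/a := hq1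
      calc |psi (N / a) - (N:ℝ)/a|
          ≤ |psi (N / a) - ((N/a:ℕ):ℝ)| + |((N/a:ℕ):ℝ) - (N:ℝ)/a| := by
            have : psi (N/a) - (N:ℝ)/a
                = (psi (N/a) - ((N/a:ℕ):ℝ)) + (((N/a:ℕ):ℝ) - (N:ℝ)/a) := by ring
            rw [this]; exact abs_add_le _ _
        _ ≤ ε' * ((N/a:ℕ):ℝ) + 1 := by
            have h3 : |((N/a:ℕ):ℝ) - (N:ℝ)/a| ≤ 1 := by
              rw [abs_le]; constructor <;> linarith
            linarith [h1, h3]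
        _ ≤ ε' * ((N:ℝ)/a) + C := by
            have := mul_le_mul_of_nonneg_left h2 hε'pos.le
            linarith
    · have h1 : psi (N / a) ≤ psi Y := psi_mono hq.le
      have h2 : (N:ℝ)/a < Y := by
        have : ((N/a:ℕ):ℝ) + 1 ≤ Y := by exact_mod_cast hq
        linarith
      have h3 : 0 ≤ psi (N / a) := psi_nonneg _
      have hY0' : (0:ℝ) ≤ Y := by positivity
      have h4 : |psi (N / a) - (N:ℝ)/a| ≤ C := by
        rw [abs_le]
        constructor
        · nlinarith [psi_nonneg Y, psi_nonneg (N / a)]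
        · nlinarith [psi_nonneg Y, psi_nonneg (N / a)]
      nlinarith [mul_nonneg hε'pos.le hyr0]
  -- main estimate
  have hmain : ∀ N : ℕ, 2 ≤ N → |MM N| / N ≤ ε' + (4 + C) / Real.log N := by
    intro N hN2
    have hN : 1 ≤ N := by omega
    have hN0 : (0:ℝ) < N := by exact_mod_cast hN
    have hL : 0 < Real.log N := Real.log_pos (by exact_mod_cast hN2)
    have hsplit : MM N * Real.log N =
        (∑ n ∈ Icc 1 N, (μ n : ℝ) * Real.log ((N:ℝ)/n))
          + ∑ n ∈ Icc 1 N, (μ n : ℝ) * Real.log n := by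
      rw [MM, Finset.sum_mul, ← Finset.sum_add_distrib]
      refine Finset.sum_congr rfl fun n hn => ?_
      obtain ⟨h1, h2⟩ := Finset.mem_Icc.1 hn
      have hn0 : (0:ℝ) < n := by exact_mod_cast h1
      rw [Real.log_div (by positivity) (by positivity)]
      ring
    have h1 : |∑ n ∈ Icc 1 N, (μ n : ℝ) * Real.log ((N:ℝ)/n)| ≤ N := by
      refine le_trans (Finset.abs_sum_le_sum_abs _ _) ?_
      refine le_trans (Finset.sum_le_sum (g := fun n : ℕ => Real.log ((N:ℝ)/n)) ?_)
        (sum_log_div_le hN)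
      intro n hn
      obtain ⟨ha1, haN⟩ := Finset.mem_Icc.1 hn
      have hl0 : 0 ≤ Real.log ((N:ℝ)/n) := by
        refine Real.log_nonneg ?_
        rw [le_div_iff₀ (by exact_mod_cast ha1 : (0:ℝ) < n), one_mul]
        exact_mod_cast haN
      rw [abs_mul, abs_of_nonneg hl0]
      nlinarith [abs_mu_le n, abs_nonneg ((μ n : ℝ))]
    -- decompose psi sum
    have hdec : ∑ a ∈ Icc 1 N, (μ a : ℝ) * psi (N / a)
        = (N:ℝ) * mm N + ∑ a ∈ Icc 1 N, (μ a : ℝ) * (psi (N / a) - (N:ℝ)/a) := by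
      rw [mm, Finset.mul_sum, ← Finset.sum_add_distrib]
      refine Finset.sum_congr rfl fun a ha => ?_
      have ha1 := (Finset.mem_Icc.1 ha).1
      have ha0 : (a:ℝ) ≠ 0 := by
        have : (0:ℝ) < a := by exact_mod_cast ha1
        exact ne_of_gt this
      field_simp
      ring
    have hR : |∑ a ∈ Icc 1 N, (μ a : ℝ) * (psi (N / a) - (N:ℝ)/a)|
        ≤ ε' * N * Real.log N + ε' * N + C * N := by
      refine le_trans (Finset.abs_sum_le_sum_abs _ _) ?_
      have step : ∀ a ∈ Icc 1 N, |(μ a : ℝ) * (psi (N / a) - (N:ℝ)/a)|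
          ≤ ε' * ((N:ℝ)/a) + C := by
        intro a ha
        rw [abs_mul]
        refine le_trans (mul_le_mul_of_nonneg_right (abs_mu_le a) (abs_nonneg _)) ?_
        rw [one_mul]
        exact hterm N hN a ha
      refine le_trans (Finset.sum_le_sum step) ?_
      rw [Finset.sum_add_distrib, Finset.sum_const, Nat.card_Icc, Nat.add_sub_cancel,
        nsmul_eq_mul]
      have harm_bound : ∑ a ∈ Icc 1 N, ε' * ((N:ℝ)/a) = ε' * N * harm N := by
        rw [harm, Finset.mul_sum]
        refine Finset.sum_congr rfl fun a _ => ?_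
        rw [div_eq_mul_one_div ((N:ℝ)) ((a:ℝ))]
        ring
      rw [harm_bound]
      have h2 := harm_le N hN
      have h3 : ε' * N * harm N ≤ ε' * N * (Real.log N + 1) := by
        refine mul_le_mul_of_nonneg_left h2 (by positivity)
      have h3' : ε' * N * (Real.log N + 1) = ε' * N * Real.log N + ε' * N := by ring
      linarith [h3]
    -- put together
    have habs : |MM N| * Real.log N ≤ ε' * N * Real.log N + (4 + C) * N := by
      have e1 : |MM N * Real.log N| = |MM N| * Real.log N := by
        rw [abs_mul, abs_of_pos hL]
      have e2 : |MM N * Real.log N| ≤ N + ((N:ℝ) * |mm N| + |∑ a ∈ Icc 1 N,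
          (μ a : ℝ) * (psi (N / a) - (N:ℝ)/a)|) := by
        rw [hsplit]
        refine le_trans (abs_add_le _ _) ?_
        have e3 : |∑ n ∈ Icc 1 N, (μ n : ℝ) * Real.log n|
            = |∑ a ∈ Icc 1 N, (μ a : ℝ) * psi (N / a)| := by
          rw [sum_mu_log_eq hN, abs_neg]
        have e4 : |∑ a ∈ Icc 1 N, (μ a : ℝ) * psi (N / a)|
            ≤ (N:ℝ) * |mm N| + |∑ a ∈ Icc 1 N, (μ a : ℝ) * (psi (N / a) - (N:ℝ)/a)| := by
          rw [hdec]
          refine le_trans (abs_add_le _ _) ?_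
          rw [abs_mul, abs_of_pos hN0]
        linarith [h1, e3 ▸ e4]
      have e5 : (N:ℝ) * |mm N| ≤ 2 * N := by
        have := abs_mm_le N
        nlinarith
      rw [e1] at e2
      have h10 : ε' * N ≤ 1 * N := mul_le_mul_of_nonneg_right hε'1 hN0.le
      have h11 : (4+C)*(N:ℝ) = 4*N + C*N := by ring
      linarith [hR, e5, h10]
    have hstep : |MM N| ≤ (ε' + (4 + C) / Real.log N) * N := by
      refine le_of_mul_le_mul_right ?_ hL
      have : (ε' + (4 + C) / Real.log N) * N * Real.log N
          = ε' * N * Real.log N + (4 + C) * N := by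
        field_simp
      rw [this]
      exact habs
    rw [div_le_iff₀ hN0]
    exact hstep
  -- conclude
  have hC0 : (0:ℝ) < C := by linarith
  obtain ⟨D, hD⟩ : ∃ D : ℝ, D = (4 + C) * 4 / ε := ⟨_, rfl⟩
  obtain ⟨N₀, hN₀⟩ : ∃ N₀ : ℕ, 2 ≤ N₀ ∧ D ≤ Real.log N₀ := by
    refine ⟨max 2 ⌈Real.exp D⌉₊, le_max_left _ _, ?_⟩
    have h1 : Real.exp D ≤ (⌈Real.exp D⌉₊ : ℝ) := Nat.le_ceil _
    have h2 : ((⌈Real.exp D⌉₊:ℕ):ℝ) ≤ ((max 2 ⌈Real.exp D⌉₊ : ℕ):ℝ) := by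
      exact_mod_cast le_max_right 2 ⌈Real.exp D⌉₊
    have h3 : Real.exp D ≤ ((max 2 ⌈Real.exp D⌉₊ : ℕ):ℝ) := le_trans h1 h2
    calc D = Real.log (Real.exp D) := (Real.log_exp D).symm
      _ ≤ Real.log _ := Real.log_le_log (Real.exp_pos D) h3
  refine ⟨N₀, fun n hn => ?_⟩
  obtain ⟨hN₀2, hN₀D⟩ := hN₀
  have hn2 : 2 ≤ n := le_trans hN₀2 hn
  have hlogn : D ≤ Real.log n := by
    refine le_trans hN₀D (Real.log_le_log (by positivity) ?_)
    exact_mod_cast hn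
  have hLpos : 0 < Real.log n := Real.log_pos (by exact_mod_cast hn2)
  have h6 : (4 + C) / Real.log n ≤ ε / 4 := by
    rw [div_le_iff₀ hLpos]
    have hne : ε ≠ 0 := ne_of_gt hε
    have h7 : ε / 4 * D = 4 + C := by
      rw [hD]; field_simp
    calc (4 + C) = ε / 4 * D := h7.symm
      _ ≤ ε / 4 * Real.log n := by
          refine mul_le_mul_of_nonneg_left hlogn (by linarith)
  have h8 := hmain n hn2
  rw [Real.dist_eq, sub_zero]
  have h9 : |MM n / n| = |MM n| / n := by
    rw [abs_div, abs_of_pos (by exact_mod_cast (by omega : 0 < n) : (0:ℝ) < n)]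
  rw [h9]
  calc |MM n| / n ≤ ε' + (4 + C)/Real.log n := h8
    _ ≤ ε/4 + ε/4 := by linarith
    _ < ε := by linarith

theorem MM_succ (v : ℕ) : MM (v + 1) = MM v + (μ (v+1) : ℝ) := by
  rw [MM, MM, Finset.sum_Icc_succ_top (by omega)]

theorem abel_identity (u : ℕ) (g : ℕ → ℝ) :
    ∀ v, u + 1 ≤ v →
      ∑ n ∈ Ioc u v, (μ n : ℝ) * g n
        = MM v * g v - MM u * g (u+1) + ∑ n ∈ Ioc u (v-1), MM n * (g n - g (n+1)) := by
  intro v hv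
  induction v, hv using Nat.le_induction with
  | base =>
    rw [show u + 1 - 1 = u by omega, Finset.Ioc_self, Finset.sum_empty,
      show Ioc u (u+1) = {u+1} by rw [← Finset.Icc_add_one_left_eq_Ioc, Finset.Icc_self],
      Finset.sum_singleton, MM_succ]
    ring
  | succ v hv ih =>
    rw [Finset.sum_Ioc_succ_top (by omega), ih,
      show v + 1 - 1 = v by omega, show v = v - 1 + 1 by omega,
      Finset.sum_Ioc_succ_top (by omega), show v - 1 + 1 = v by omega, MM_succ]
    ring

theorem telescope (u : ℕ) (g : ℕ → ℝ) :
    ∀ v, u + 1 ≤ v → ∑ n ∈ Ioc u (v-1), (g n - g (n+1)) = g (u+1) - g v := by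
  intro v hv
  induction v, hv using Nat.le_induction with
  | base =>
    rw [show u + 1 - 1 = u by omega, Finset.Ioc_self, Finset.sum_empty]
    ring
  | succ v hv ih =>
    rw [show v + 1 - 1 = v by omega, show v = v - 1 + 1 by omega,
      Finset.sum_Ioc_succ_top (by omega), show v - 1 + 1 = v by omega, ih]
    ring

theorem abel_block (u v : ℕ) (huv : u ≤ v) (g : ℕ → ℝ)
    (hg_anti : ∀ m n, u + 1 ≤ m → m ≤ n → n ≤ v → g n ≤ g m)
    (hg0 : ∀ n, u + 1 ≤ n → n ≤ v → 0 ≤ g n)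
    (hg1 : ∀ n, u + 1 ≤ n → n ≤ v → g n ≤ 1)
    (B : ℝ) (hB : ∀ t, u ≤ t → t ≤ v → |MM t| ≤ B) :
    |∑ n ∈ Ioc u v, (μ n : ℝ) * g n| ≤ 2 * B := by
  rcases eq_or_lt_of_le huv with rfl | hlt
  · rw [Finset.Ioc_self, Finset.sum_empty, abs_zero]
    have := (abs_nonneg (MM u)).trans (hB u le_rfl le_rfl)
    linarith
  have hv : u + 1 ≤ v := hlt
  have hBnn : 0 ≤ B := (abs_nonneg (MM u)).trans (hB u le_rfl huv)
  rw [abel_identity u g v hv]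
  have ht := telescope u g v hv
  have h1 : |∑ n ∈ Ioc u (v-1), MM n * (g n - g (n+1))|
      ≤ B * (g (u+1) - g v) := by
    refine le_trans (Finset.abs_sum_le_sum_abs _ _) ?_
    have hterm : ∀ n ∈ Ioc u (v-1), |MM n * (g n - g (n+1))| ≤ B * (g n - g (n+1)) := by
      intro n hn
      obtain ⟨hn1, hn2⟩ := Finset.mem_Ioc.1 hn
      have hd : 0 ≤ g n - g (n+1) := by
        have := hg_anti n (n+1) (by omega) (by omega) (by omega)
        linarith
      rw [abs_mul, abs_of_nonneg hd]
      exact mul_le_mul_of_nonneg_right (hB n (by omega) (by omega)) hd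
    refine le_trans (Finset.sum_le_sum hterm) ?_
    rw [← Finset.mul_sum, ht]
  have h2 : |MM v * g v| ≤ B * g v := by
    rw [abs_mul, abs_of_nonneg (hg0 v hv le_rfl)]
    exact mul_le_mul_of_nonneg_right (hB v huv le_rfl) (hg0 v hv le_rfl)
  have h3 : |MM u * g (u+1)| ≤ B * g (u+1) := by
    rw [abs_mul, abs_of_nonneg (hg0 (u+1) le_rfl hv)]
    exact mul_le_mul_of_nonneg_right (hB u le_rfl huv) (hg0 (u+1) le_rfl hv)
  have hgu1 : g (u+1) ≤ 1 := hg1 (u+1) le_rfl hv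
  calc |MM v * g v - MM u * g (u+1) + ∑ n ∈ Ioc u (v-1), MM n * (g n - g (n+1))|
      ≤ |MM v * g v - MM u * g (u+1)| + |∑ n ∈ Ioc u (v-1), MM n * (g n - g (n+1))| :=
        abs_add_le _ _
    _ ≤ (|MM v * g v| + |MM u * g (u+1)|) + B * (g (u+1) - g v) := by
        have := abs_sub (MM v * g v) (MM u * g (u+1))
        linarith
    _ ≤ B * g v + B * g (u+1) + B * (g (u+1) - g v) := by linarith
    _ = 2 * B * g (u+1) := by ring
    _ ≤ 2 * B := by nlinarith

theorem partition_sum (N K : ℕ) (hK : 1 ≤ K) (f : ℕ → ℝ) :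
    ∀ j, 1 ≤ j → j ≤ K →
      ∑ n ∈ Ioc (N / K) (N / j), f n
        = ∑ k ∈ Ico j K, ∑ n ∈ Ioc (N / (k+1)) (N / k), f n := by
  intro j hj hjK
  obtain ⟨d, hd⟩ : ∃ d, K = j + d := ⟨K - j, by omega⟩
  subst hd
  clear hjK hK
  induction d generalizing j with
  | zero => simp
  | succ d ih =>
    have h1 : N / (j + (d+1)) ≤ N / (j+1) := Nat.div_le_div_left (by omega) (by omega)
    have h2 : N / (j + 1) ≤ N / j := Nat.div_le_div_left (by omega) (by omega)
    rw [← Finset.sum_Ioc_consecutive f h1 h2,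
      Finset.sum_eq_sum_Ico_succ_bot (by omega : j < j + (d+1))]
    have := ih (j+1) (by omega)
    rw [show j + (d+1) = (j+1) + d by omega] at *
    rw [this]
    ring

theorem AA_tendsto (hM : Tendsto (fun N : ℕ => MM N / N) atTop (nhds 0)) :
    Tendsto (fun N : ℕ => AA N / N) atTop (nhds 0) := by
  rw [Metric.tendsto_atTop]
  intro ε hε
  obtain ⟨K, hK1, hKε⟩ : ∃ K : ℕ, 1 ≤ K ∧ 4 / ε ≤ K :=
    ⟨max 1 ⌈4/ε⌉₊, le_max_left _ _, le_trans (Nat.le_ceil _) (by exact_mod_cast le_max_right 1 ⌈4/ε⌉₊)⟩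
  have hK0 : (0:ℝ) < K := by exact_mod_cast hK1
  have hKinv : 1 / (K:ℝ) ≤ ε / 4 := by
    rw [div_le_div_iff₀ hK0 (by norm_num)]
    have h := mul_le_mul_of_nonneg_left hKε (le_of_lt hε)
    have h' : ε * (4/ε) = 4 := by field_simp
    linarith
  set δ := ε / (8 * K) with hδ
  have hδ0 : 0 < δ := by rw [hδ]; positivity
  obtain ⟨T0, hT0⟩ := Metric.tendsto_atTop.1 hM δ hδ0
  obtain ⟨T, hT1, hTT0⟩ : ∃ T : ℕ, 1 ≤ T ∧ T0 ≤ T := ⟨max T0 1, le_max_right _ _, le_max_left _ _⟩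
  have hTprop : ∀ t : ℕ, T ≤ t → |MM t| ≤ δ * t := by
    intro t ht
    have ht1 : 1 ≤ t := le_trans hT1 ht
    have ht0 : (0:ℝ) < t := by exact_mod_cast ht1
    have := hT0 t (le_trans hTT0 ht)
    rw [Real.dist_eq, sub_zero] at this
    have h3 : |MM t / t| * t ≤ δ * t := mul_le_mul_of_nonneg_right this.le ht0.le
    rwa [abs_div, abs_of_pos ht0, div_mul_cancel₀ _ (ne_of_gt ht0)] at h3
  refine ⟨K * T, fun N hN => ?_⟩
  have hNKT : K * T ≤ N := hN
  have hN1 : 1 ≤ N := by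
    have := Nat.mul_pos hK1 hT1
    omega
  have hN0 : (0:ℝ) < N := by exact_mod_cast hN1
  have hNKge : T ≤ N / K := (Nat.le_div_iff_mul_le (by omega)).2
    (le_trans (le_of_eq (Nat.mul_comm T K)) hNKT)
  -- split AA
  have hsplit : AA N = (∑ a ∈ Ioc 0 (N / K), (μ a : ℝ) * (N % a : ℕ) / a)
      + ∑ a ∈ Ioc (N / K) N, (μ a : ℝ) * (N % a : ℕ) / a := by
    have hIcc : Icc 1 N = Ioc 0 N := by ext x; simp [Nat.lt_iff_add_one_le]
    rw [AA, hIcc, ← Finset.sum_Ioc_consecutive _ (Nat.zero_le (N/K)) (Nat.div_le_self N K)]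
  -- first part
  have hfirst : |∑ a ∈ Ioc 0 (N / K), (μ a : ℝ) * (N % a : ℕ) / a| ≤ ε / 4 * N := by
    refine le_trans (Finset.abs_sum_le_sum_abs _ _) ?_
    have hterm : ∀ a ∈ Ioc 0 (N / K), |(μ a : ℝ) * (N % a : ℕ) / a| ≤ 1 := by
      intro a ha
      have ha1 : 1 ≤ a := (Finset.mem_Ioc.1 ha).1
      have ha0 : (0:ℝ) < a := by exact_mod_cast ha1
      have h1 : ((N % a : ℕ) : ℝ) < a := by exact_mod_cast Nat.mod_lt N ha1
      have h2 : (0:ℝ) ≤ ((N % a : ℕ):ℝ) := by positivity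
      rw [abs_div, abs_mul, abs_of_pos ha0, abs_of_nonneg h2, div_le_one ha0]
      nlinarith [mul_le_mul_of_nonneg_right (abs_mu_le a) h2]
    refine le_trans (Finset.sum_le_sum hterm) ?_
    rw [Finset.sum_const, Nat.card_Ioc, nsmul_eq_mul, mul_one, Nat.sub_zero]
    have h3 : ((N / K : ℕ):ℝ) ≤ (N:ℝ) / K := Nat.cast_div_le
    have h4 : (N:ℝ)/K ≤ ε/4 * N := by
      rw [div_eq_mul_one_div]
      calc (N:ℝ) * (1/K) ≤ (N:ℝ) * (ε/4) := by
            refine mul_le_mul_of_nonneg_left hKinv hN0.le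
        _ = ε/4 * N := by ring
    linarith
  -- second part
  have hsecond : |∑ a ∈ Ioc (N / K) N, (μ a : ℝ) * (N % a : ℕ) / a| ≤ ε / 4 * N := by
    have hNN : N / 1 = N := Nat.div_one N
    have hpart := partition_sum N K hK1 (fun a => (μ a : ℝ) * (N % a : ℕ) / a) 1 le_rfl hK1
    rw [hNN] at hpart
    rw [hpart]
    refine le_trans (Finset.abs_sum_le_sum_abs _ _) ?_
    have hblock : ∀ k ∈ Ico 1 K,
        |∑ n ∈ Ioc (N / (k+1)) (N / k), (μ n : ℝ) * (N % n : ℕ) / n| ≤ 2 * (δ * N) := by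
      intro k hk
      obtain ⟨hk1, hkK⟩ := Finset.mem_Ico.1 hk
      have hk0 : (0:ℝ) < k := by exact_mod_cast hk1
      obtain ⟨u, hu⟩ : ∃ u, u = N / (k+1) := ⟨_, rfl⟩
      obtain ⟨v, hv⟩ : ∃ v, v = N / k := ⟨_, rfl⟩
      have huv : u ≤ v := by
        rw [hu, hv]; exact Nat.div_le_div_left (by omega) (by omega)
      -- rewrite each term using g
      have hgeq : ∀ n, u + 1 ≤ n → n ≤ v → (μ n : ℝ) * (N % n : ℕ) / n
          = (μ n : ℝ) * ((N:ℝ)/n - k) := by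
        intro n hn1 hn2
        have hn0 : 1 ≤ n := by omega
        have hnr : (0:ℝ) < n := by exact_mod_cast hn0
        have hdiv : N / n = k := by
          have hle : k ≤ N / n := by
            rw [Nat.le_div_iff_mul_le (by omega : 0 < n), Nat.mul_comm]
            exact (Nat.le_div_iff_mul_le (by omega : 0 < k)).1 (hv ▸ hn2 : n ≤ N / k)
          have hlt : N / n < k + 1 := by
            rw [Nat.div_lt_iff_lt_mul (by omega : 0 < n), Nat.mul_comm]
            exact (Nat.div_lt_iff_lt_mul (by omega : 0 < k+1)).1 (by omega : N / (k+1) < n)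
          omega
        have hmod : ((N % n : ℕ):ℝ) = (N:ℝ) - n * k := by
          have := Nat.div_add_mod N n
          have h7 : (N:ℝ) = n * ((N/n : ℕ):ℝ) + ((N % n : ℕ):ℝ) := by
            exact_mod_cast congrArg (Nat.cast : ℕ → ℝ) this.symm
          rw [hdiv] at h7
          push_cast at h7 ⊢
          linarith
        rw [hmod]
        field_simp
      rw [← hu, ← hv, Finset.sum_congr rfl (fun n hn => hgeq n (Finset.mem_Ioc.1 hn).1
        (Finset.mem_Ioc.1 hn).2)]
      -- apply abel_block
      refine abel_block u v huv (fun n => (N:ℝ)/n - k) ?_ ?_ ?_ (δ * N) ?_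
      · intro m n hm hmn hnv
        have hm0 : (0:ℝ) < m := by
          have : 1 ≤ m := by omega
          exact_mod_cast this
        have hn0 : (0:ℝ) < n := by
          have : (m:ℝ) ≤ n := by exact_mod_cast hmn
          linarith
        have : (N:ℝ)/n ≤ (N:ℝ)/m := by
          refine div_le_div_of_nonneg_left (by positivity) hm0 ?_
          exact_mod_cast hmn
        linarith
      · intro n hn1 hn2
        have hn0 : 1 ≤ n := by omega
        have hnr : (0:ℝ) < n := by exact_mod_cast hn0
        have h5 : k * n ≤ N := by
          rw [Nat.mul_comm]
          exact (Nat.le_div_iff_mul_le (by omega : 0 < k)).1 (hv ▸ hn2 : n ≤ N / k)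
        have h6 : (k:ℝ) ≤ (N:ℝ)/n := by
          rw [le_div_iff₀ hnr]
          exact_mod_cast h5
        linarith
      · intro n hn1 hn2
        have hn0 : 1 ≤ n := by omega
        have hnr : (0:ℝ) < n := by exact_mod_cast hn0
        have h7 : N < n * (k+1) :=
          (Nat.div_lt_iff_lt_mul (by omega : 0 < k+1)).1 (by omega : N / (k+1) < n)
        have h8 : (N:ℝ) < n * (k+1) := by exact_mod_cast h7
        have h9 : (N:ℝ)/n < k + 1 := by
          rw [div_lt_iff₀ hnr]
          nlinarith
        linarith
      · intro t hut htv
        have hTt : T ≤ t := by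
          refine le_trans ?_ hut
          rw [hu]
          exact le_trans hNKge (Nat.div_le_div_left (by omega : k + 1 ≤ K) (by omega))
        have htN : t ≤ N := le_trans (hv ▸ htv : t ≤ N / k) (Nat.div_le_self N k)
        have h10 := hTprop t hTt
        have h11 : δ * t ≤ δ * N := by
          refine mul_le_mul_of_nonneg_left (by exact_mod_cast htN) hδ0.le
        linarith
    refine le_trans (Finset.sum_le_sum hblock) ?_
    rw [Finset.sum_const, Nat.card_Ico, nsmul_eq_mul]
    have h12 : ((K - 1 : ℕ):ℝ) ≤ K := by
      have : (K - 1 : ℕ) ≤ K := by omega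
      exact_mod_cast this
    have h13 : (K:ℝ) * (2 * (δ * N)) = ε / 4 * N := by
      rw [hδ]
      field_simp
      ring
    calc ((K - 1:ℕ):ℝ) * (2 * (δ * N)) ≤ (K:ℝ) * (2 * (δ * N)) := by
          refine mul_le_mul_of_nonneg_right h12 (by positivity)
      _ = ε / 4 * N := h13
  -- combine
  rw [Real.dist_eq, sub_zero]
  have hfinal : |AA N| ≤ ε / 2 * N := by
    rw [hsplit]
    refine le_trans (abs_add_le _ _) ?_
    calc |∑ a ∈ Ioc 0 (N / K), (μ a : ℝ) * (N % a : ℕ) / a|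
          + |∑ a ∈ Ioc (N / K) N, (μ a : ℝ) * (N % a : ℕ) / a|
        ≤ ε/4 * N + ε/4 * N := add_le_add hfirst hsecond
      _ = ε/2 * N := by ring
  have h14 : |AA N / N| = |AA N| / N := by
    rw [abs_div, abs_of_pos hN0]
  rw [h14, div_lt_iff₀ hN0]
  calc |AA N| ≤ ε/2 * N := hfinal
    _ < ε * N := by nlinarith

theorem mm_tendsto (hA : Tendsto (fun N : ℕ => AA N / N) atTop (nhds 0)) :
    Tendsto (fun N : ℕ => mm N) atTop (nhds 0) := by
  have h1 : Tendsto (fun N : ℕ => 1 / (N:ℝ) + AA N / N) atTop (nhds (0 + 0)) := by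
    refine Tendsto.add ?_ hA
    exact tendsto_one_div_atTop_nhds_zero_nat
  rw [add_zero] at h1
  refine h1.congr' ?_
  filter_upwards [eventually_ge_atTop 1] with N hN
  have hN0 : (0:ℝ) < N := by exact_mod_cast hN
  have h2 := N_mul_mm hN
  field_simp
  linarith [h2]

theorem moebius_log_div_log_tendsto_zero
    (hθ : Tendsto (fun x : ℝ => theta x / x) atTop (nhds 1)) :
    Tendsto (fun x : ℝ =>
        (1 / Real.log x) *
          ∑ k ∈ Finset.Icc 1 ⌊x⌋₊, (ArithmeticFunction.moebius k : ℝ) * Real.log k / k)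
      atTop (nhds 0) := by
  have hthN : Tendsto (fun N : ℕ => thetaN N / N) atTop (nhds 1) := by
    have h := hθ.comp tendsto_natCast_atTop_atTop (α := ℕ)
    refine h.congr fun N => ?_
    simp only [Function.comp_apply, theta, thetaN, Nat.floor_natCast]
  have hmm0 := mm_tendsto (AA_tendsto (MM_tendsto (psi_div_tendsto hthN)))
  have hmmx : Tendsto (fun x : ℝ => |mm ⌊x⌋₊|) atTop (nhds 0) := by
    have := (hmm0.comp (tendsto_nat_floor_atTop (α := ℝ))).abs
    rwa [abs_zero] at this
  have hclog : Tendsto (fun x : ℝ => (5 + 2*|emc|) / Real.log x) atTop (nhds 0) :=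
    tendsto_const_nhds.div_atTop Real.tendsto_log_atTop
  have hg : Tendsto (fun x : ℝ => |mm ⌊x⌋₊| + (5 + 2*|emc|) / Real.log x) atTop (nhds 0) := by
    have := hmmx.add hclog
    rwa [add_zero] at this
  refine squeeze_zero_norm' ?_ hg
  filter_upwards [eventually_ge_atTop (2:ℝ)] with x hx
  have hN2 : 2 ≤ ⌊x⌋₊ := Nat.le_floor (by exact_mod_cast hx)
  have hN1 : 1 ≤ ⌊x⌋₊ := by omega
  have hNx : (⌊x⌋₊ : ℝ) ≤ x := Nat.floor_le (by linarith)
  have hlogx : 0 < Real.log x := Real.log_pos (by linarith)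
  have hlogN : 0 ≤ Real.log (⌊x⌋₊ : ℝ) := Real.log_natCast_nonneg _
  have hlogle : Real.log (⌊x⌋₊ : ℝ) ≤ Real.log x :=
    Real.log_le_log (by exact_mod_cast hN1) hNx
  have hsum : ∑ k ∈ Finset.Icc 1 ⌊x⌋₊, (μ k : ℝ) * Real.log k / k = HH ⌊x⌋₊ := rfl
  rw [hsum]
  have hHH := HH_eq hN1
  have hSS := SS_bound hN1
  rw [Real.norm_eq_abs, abs_mul, abs_div, abs_one, abs_of_pos hlogx, hHH]
  have h3 : |mm ⌊x⌋₊ * Real.log (⌊x⌋₊:ℝ) - SS ⌊x⌋₊|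
      ≤ |mm ⌊x⌋₊| * Real.log (⌊x⌋₊:ℝ) + (5 + 2*|emc|) := by
    refine le_trans (abs_sub _ _) ?_
    rw [abs_mul, abs_of_nonneg hlogN]
    linarith
  have h4 : 1 / Real.log x * |mm ⌊x⌋₊ * Real.log (⌊x⌋₊:ℝ) - SS ⌊x⌋₊|
      ≤ (|mm ⌊x⌋₊| * Real.log (⌊x⌋₊:ℝ) + (5 + 2*|emc|)) / Real.log x := by
    rw [one_div, inv_mul_eq_div]
    gcongr
  refine le_trans h4 ?_
  rw [add_div]
  have h5 : |mm ⌊x⌋₊| * Real.log (⌊x⌋₊:ℝ) / Real.log x ≤ |mm ⌊x⌋₊| := by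
    rw [div_le_iff₀ hlogx]
    exact mul_le_mul_of_nonneg_left hlogle (abs_nonneg _)
  exact add_le_add_left h5 _

end PNTAux
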